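/- Let C, D ⊆ {0,1}ⁿ be neural codes. Then every minimal reduced product is a minimal pseudo-monomial of J_{C∪D}: MP(C, D) ⊆ CF(J_{C∪D}). -/

import Mathlib

open MvPolynomial

/-- The characteristic polynomial `ρ_v = ∏ i, (1 - v_i - x_i)` of a word `v ∈ {0,1}ⁿ = 𝔽₂ⁿ`. -/
noncomputable def rho (n : ℕ) (v : Fin n → ZMod 2) : MvPolynomial (Fin n) (ZMod 2) :=
  ∏ i, (1 - C (v i) - X i)

/-- The neural ideal `J_C = ⟨ρ_v : v ∉ C⟩` of a neural code `C ⊆ {0,1}ⁿ`. -/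
noncomputable def neuralIdeal (n : ℕ) (Co : Set (Fin n → ZMod 2)) :
    Ideal (MvPolynomial (Fin n) (ZMod 2)) :=
  Ideal.span { p | ∃ v, v ∉ Co ∧ p = rho n v }

/-- A pseudo-monomial: `∏_{i∈σ} x_i ∏_{j∈τ} (1 - x_j)` with `σ, τ` disjoint. -/
def IsPseudoMonomial (n : ℕ) (f : MvPolynomial (Fin n) (ZMod 2)) : Prop :=
  ∃ σ τ : Finset (Fin n), Disjoint σ τ ∧
    f = (∏ i ∈ σ, X i) * ∏ j ∈ τ, (1 - X j)

/-- `f` is a minimal pseudo-monomial of the ideal `J`. -/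
def IsMinimalPM (n : ℕ) (J : Ideal (MvPolynomial (Fin n) (ZMod 2)))
    (f : MvPolynomial (Fin n) (ZMod 2)) : Prop :=
  f ∈ J ∧ IsPseudoMonomial n f ∧
    ¬ ∃ g, IsPseudoMonomial n g ∧ g ∈ J ∧ g.totalDegree < f.totalDegree ∧
      ∃ h, f = g * h

/-- The canonical form `CF(J)`: the set of all minimal pseudo-monomials of `J`. -/
def CF (n : ℕ) (J : Ideal (MvPolynomial (Fin n) (ZMod 2))) :
    Set (MvPolynomial (Fin n) (ZMod 2)) :=
  { f | IsMinimalPM n J f }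

/-- An ideal is a pseudo-monomial ideal if it is generated by finitely many pseudo-monomials. -/
def IsPseudoMonomialIdeal (n : ℕ) (J : Ideal (MvPolynomial (Fin n) (ZMod 2))) : Prop :=
  ∃ S : Finset (MvPolynomial (Fin n) (ZMod 2)),
    (∀ f ∈ S, IsPseudoMonomial n f) ∧ J = Ideal.span (S : Set (MvPolynomial (Fin n) (ZMod 2)))

/-- A polynomial is square-free if every variable occurs with exponent at most 1
in every monomial of its support. -/
def IsSquareFreePoly (n : ℕ) (f : MvPolynomial (Fin n) (ZMod 2)) : Prop :=
  ∀ m ∈ f.support, ∀ i, m i ≤ 1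

/-- The Boolean ideal `B = ⟨x_i (1 - x_i) : 1 ≤ i ≤ n⟩`. -/
noncomputable def boolIdeal (n : ℕ) : Ideal (MvPolynomial (Fin n) (ZMod 2)) :=
  Ideal.span { p | ∃ i : Fin n, p = X i * (1 - X i) }

/-- The square-free representative `h_R` of `h` modulo the Boolean ideal:
replace every exponent by its truncation at 1. -/
noncomputable def sqReduce (n : ℕ) (h : MvPolynomial (Fin n) (ZMod 2)) :
    MvPolynomial (Fin n) (ZMod 2) :=
  ∑ m ∈ h.support,
    monomial (Finsupp.mapRange (fun e => min e 1) (by simp) m) (coeff m h)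

/-- The set of reduced products `P(C,D) = {(f g)_R : f ∈ CF(J_C), g ∈ CF(J_D)}`. -/
def reducedProducts (n : ℕ) (Co D : Set (Fin n → ZMod 2)) :
    Set (MvPolynomial (Fin n) (ZMod 2)) :=
  { p | ∃ f ∈ CF n (neuralIdeal n Co), ∃ g ∈ CF n (neuralIdeal n D), p = sqReduce n (f * g) }

/-- The set of minimal reduced products `MP(C,D)`. -/
def minReducedProducts (n : ℕ) (Co D : Set (Fin n → ZMod 2)) :
    Set (MvPolynomial (Fin n) (ZMod 2)) :=
  { h | h ∈ reducedProducts n Co D ∧ h ≠ 0 ∧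
    ¬ ∃ f ∈ reducedProducts n Co D, ∃ g : MvPolynomial (Fin n) (ZMod 2),
      1 ≤ g.totalDegree ∧ h = f * g }

/-- The code `C(U)` of a cover `U = {U_1, …, U_n}` of a topological space `X`. -/
def codeOfCover {X : Type*} [TopologicalSpace X] (n : ℕ) (U : Fin n → Set X) :
    Set (Fin n → ZMod 2) :=
  { v | ((⋂ i ∈ { i : Fin n | v i = 1 }, U i) \ ⋃ j ∈ { j : Fin n | v j = 0 }, U j).Nonempty }

namespace Stmt8Aux
open MvPolynomial Finset

variable {n : ℕ}

local notation "R" => MvPolynomial (Fin n) (ZMod 2)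

noncomputable def plin (s : Finset (Fin n)) (c : Fin n → ZMod 2) : MvPolynomial (Fin n) (ZMod 2) :=
  ∏ i ∈ s, (MvPolynomial.C (c i) + X i)

noncomputable def pm (σ τ : Finset (Fin n)) : MvPolynomial (Fin n) (ZMod 2) :=
  (∏ i ∈ σ, X i) * ∏ j ∈ τ, (1 - X j)

noncomputable def ind (s : Finset (Fin n)) : (Fin n) →₀ ℕ := ∑ i ∈ s, Finsupp.single i 1

lemma charTwoR : (2 : R) = 0 := by
  have h : (2 : R) = MvPolynomial.C (2 : ZMod 2) := by
    rw [show (2 : ZMod 2) = 1 + 1 from rfl, map_add, MvPolynomial.C_1]; ring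
  rw [h, show (2 : ZMod 2) = 0 from rfl, map_zero]

lemma one_sub_X (i : Fin n) : (1 - X i : R) = MvPolynomial.C 1 + X i := by
  have h2 : (2 : R) = 0 := charTwoR
  rw [MvPolynomial.C_1]; linear_combination (-(X i) : R) * h2

lemma pm_eq_plin (σ τ : Finset (Fin n)) (h : Disjoint σ τ) :
    pm σ τ = plin (σ ∪ τ) (fun i => if i ∈ τ then 1 else 0) := by
  rw [plin, Finset.prod_union h, pm]
  congr 1
  · exact Finset.prod_congr rfl fun i hi => by
      rw [if_neg (Finset.disjoint_left.mp h hi)]; simp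
  · exact Finset.prod_congr rfl fun i hi => by rw [if_pos hi, one_sub_X]

lemma plin_support (s : Finset (Fin n)) (c : Fin n → ZMod 2) :
    ∀ m ∈ (plin s c).support, ∀ i, m i ≤ if i ∈ s then 1 else 0 := by
  classical
  induction s using Finset.induction_on with
  | empty =>
    intro m hm i
    simp only [plin, Finset.prod_empty] at hm
    have : m = 0 := by
      by_contra h
      simp [MvPolynomial.mem_support_iff, MvPolynomial.coeff_one, h, eq_comm] at hm
    simp [this]
  | insert a s ha ih =>
    intro m hm i
    rw [plin, Finset.prod_insert ha, ← plin, add_mul] at hm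
    rcases Finset.mem_union.mp (MvPolynomial.support_add hm) with hq | hq
    · have hq' : m ∈ (plin s c).support := by
        have : (MvPolynomial.C (c a) : R) * plin s c = c a • plin s c := by
          rw [MvPolynomial.smul_eq_C_mul]
        rw [this] at hq
        exact MvPolynomial.support_smul hq
      have := ih m hq' i
      by_cases his : i ∈ insert a s
      · rw [if_pos his]
        split at this <;> omega
      · rw [if_neg his]
        rw [Finset.mem_insert, not_or] at his
        rw [if_neg his.2] at this; omega
    · rw [MvPolynomial.support_X_mul] at hq
      obtain ⟨m', hm', rfl⟩ := Finset.mem_map.mp hq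
      have := ih m' hm' i
      simp only [addLeftEmbedding_apply, Finsupp.add_apply, Finsupp.single_apply]
      by_cases hia : i = a
      · subst hia
        rw [if_pos (Finset.mem_insert_self _ _), if_neg ha] at *
        simp; omega
      · have hai : ¬ a = i := fun h => hia h.symm
        rw [if_neg hai, zero_add]
        by_cases his : i ∈ s
        · rw [if_pos (Finset.mem_insert_of_mem his)]
          rw [if_pos his] at this; omega
        · rw [if_neg (by simp [hia, his])]
          rw [if_neg his] at this; omega

lemma ind_insert (a : Fin n) (s : Finset (Fin n)) (ha : a ∉ s) :
    ind (insert a s) = Finsupp.single a 1 + ind s := by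
  rw [ind, Finset.sum_insert ha]; rfl

lemma ind_apply (s : Finset (Fin n)) (i : Fin n) : ind s i = if i ∈ s then 1 else 0 := by
  classical
  induction s using Finset.induction_on with
  | empty => simp [ind]
  | insert a s ha ih =>
    rw [ind_insert a s ha, Finsupp.add_apply, ih, Finsupp.single_apply]
    by_cases hia : i = a
    · subst hia; simp [ha]
    · simp [hia, Ne.symm hia]

lemma plin_coeff_ind (s : Finset (Fin n)) (c : Fin n → ZMod 2) :
    MvPolynomial.coeff (ind s) (plin s c) = 1 := by
  classical
  induction s using Finset.induction_on with
  | empty => simp [plin, ind]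
  | insert a s ha ih =>
    rw [plin, Finset.prod_insert ha, ← plin, add_mul, MvPolynomial.coeff_add,
      ind_insert a s ha, MvPolynomial.coeff_X_mul, ih]
    have : MvPolynomial.coeff (Finsupp.single a 1 + ind s) ((MvPolynomial.C (c a) : R) * plin s c) = 0 := by
      rw [MvPolynomial.coeff_C_mul]
      have : MvPolynomial.coeff (Finsupp.single a 1 + ind s) (plin s c) = 0 := by
        by_contra h
        have := plin_support s c _ (MvPolynomial.mem_support_iff.mpr h) a
        rw [if_neg ha] at this
        simp [ind_apply, ha] at this
      rw [this, mul_zero]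
    rw [this, zero_add]

lemma plin_ne_zero (s : Finset (Fin n)) (c : Fin n → ZMod 2) : plin s c ≠ 0 := by
  intro h
  have := plin_coeff_ind s c
  rw [h] at this; simp at this

lemma ind_sum (s : Finset (Fin n)) : (ind s).sum (fun _ e => e) = s.card := by
  classical
  induction s using Finset.induction_on with
  | empty => simp [ind]
  | insert a s ha ih =>
    rw [ind_insert a s ha, Finsupp.sum_add_index (by simp) (by simp), ih,
      Finsupp.sum_single_index rfl, Finset.card_insert_of_notMem ha]
    omega

lemma plin_totalDegree (s : Finset (Fin n)) (c : Fin n → ZMod 2) :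
    (plin s c).totalDegree = s.card := by
  apply le_antisymm
  · rw [plin]
    calc (∏ i ∈ s, (MvPolynomial.C (c i) + X i)).totalDegree ≤ ∑ i ∈ s, (MvPolynomial.C (c i) + X i).totalDegree :=
        MvPolynomial.totalDegree_finset_prod s _
    _ ≤ ∑ _i ∈ s, 1 := by
        apply Finset.sum_le_sum
        intro i _
        calc (MvPolynomial.C (c i) + X i).totalDegree
            ≤ max (MvPolynomial.C (c i) : R).totalDegree (X i : R).totalDegree :=
              MvPolynomial.totalDegree_add _ _
          _ ≤ 1 := by simp [MvPolynomial.totalDegree_X]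
    _ = s.card := by simp
  · have h := MvPolynomial.le_totalDegree (p := plin s c) (s := ind s)
      (MvPolynomial.mem_support_iff.mpr (by rw [plin_coeff_ind]; exact one_ne_zero))
    rwa [ind_sum] at h

end Stmt8Aux

namespace Stmt8Aux
open MvPolynomial Finset

variable {n : ℕ}

local notation "R" => MvPolynomial (Fin n) (ZMod 2)

lemma pm_totalDegree (σ τ : Finset (Fin n)) (h : Disjoint σ τ) :
    (pm σ τ).totalDegree = σ.card + τ.card := by
  rw [pm_eq_plin σ τ h, plin_totalDegree, Finset.card_union_of_disjoint h]

lemma pm_ne_zero (σ τ : Finset (Fin n)) (h : Disjoint σ τ) : pm σ τ ≠ 0 := by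
  rw [pm_eq_plin σ τ h]; exact plin_ne_zero _ _

lemma pm_squarefree (σ τ : Finset (Fin n)) (h : Disjoint σ τ) :
    IsSquareFreePoly n (pm σ τ) := by
  intro m hm i
  rw [pm_eq_plin σ τ h] at hm
  have := plin_support _ _ m hm i
  split at this <;> omega

lemma isPM_iff (f : MvPolynomial (Fin n) (ZMod 2)) :
    IsPseudoMonomial n f ↔ ∃ σ τ : Finset (Fin n), Disjoint σ τ ∧ f = pm σ τ := Iff.rfl

lemma eval_pm (v : Fin n → ZMod 2) (σ τ : Finset (Fin n)) :
    MvPolynomial.eval v (pm σ τ) = (∏ i ∈ σ, v i) * ∏ j ∈ τ, (1 - v j) := by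
  simp [pm]

lemma eval_rho (v w : Fin n → ZMod 2) :
    MvPolynomial.eval v (rho n w) = ∏ i, (1 - w i - v i) := by
  simp [rho]

lemma eval_rho_ne (v w : Fin n → ZMod 2) (hvw : v ≠ w) :
    MvPolynomial.eval v (rho n w) = 0 := by
  rw [eval_rho]
  obtain ⟨i, hi⟩ := Function.ne_iff.mp hvw
  apply Finset.prod_eq_zero (Finset.mem_univ i)
  revert hi
  generalize v i = a; generalize w i = b
  revert a b; decide

lemma eval_mem_neuralIdeal {S : Set (Fin n → ZMod 2)} {h : MvPolynomial (Fin n) (ZMod 2)}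
    (hmem : h ∈ neuralIdeal n S) {v : Fin n → ZMod 2} (hv : v ∈ S) :
    MvPolynomial.eval v h = 0 := by
  rw [neuralIdeal] at hmem
  refine Submodule.span_induction (p := fun h _ => MvPolynomial.eval v h = 0) ?_ ?_ ?_ ?_ hmem
  · rintro p ⟨w, hw, rfl⟩
    exact eval_rho_ne v w (fun h => hw (h ▸ hv))
  · simp
  · intro a b _ _ ha hb; simp [ha, hb]
  · intro a b _ hb; simp [hb]

lemma sum_rho_filter (s : Finset (Fin n)) (u : Fin n → ZMod 2) :
    ∑ v ∈ Finset.univ.filter (fun v : Fin n → ZMod 2 => ∀ i ∈ s, v i = u i), rho n v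
      = ∏ i ∈ s, (1 - MvPolynomial.C (u i) - X i) := by
  classical
  suffices H : ∀ (k : ℕ) (s : Finset (Fin n)) (u : Fin n → ZMod 2),
      (Finset.univ \ s).card = k →
      ∑ v ∈ Finset.univ.filter (fun v : Fin n → ZMod 2 => ∀ i ∈ s, v i = u i), rho n v
        = ∏ i ∈ s, (1 - MvPolynomial.C (u i) - X i) by
    exact H _ s u rfl
  intro k
  induction k with
  | zero =>
    intro s u hk
    have hs : s = Finset.univ := by
      have := Finset.card_eq_zero.mp hk
      have := Finset.sdiff_eq_empty_iff_subset.mp this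
      exact Finset.eq_univ_iff_forall.mpr fun i => this (Finset.mem_univ i)
    subst hs
    have : Finset.univ.filter (fun v : Fin n → ZMod 2 => ∀ i ∈ Finset.univ, v i = u i) = {u} := by
      ext v
      constructor
      · intro hvf
        rw [Finset.mem_filter] at hvf
        rw [Finset.mem_singleton]
        funext i; exact hvf.2 i (Finset.mem_univ i)
      · intro hv
        rw [Finset.mem_singleton] at hv
        subst hv
        exact Finset.mem_filter.mpr ⟨Finset.mem_univ _, fun i _ => rfl⟩
    rw [this, Finset.sum_singleton, rho]
  | succ k ih =>
    intro s u hk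
    obtain ⟨a, ha⟩ : ∃ a, a ∉ s := by
      by_contra h
      push_neg at h
      have : s = Finset.univ := Finset.eq_univ_iff_forall.mpr h
      rw [this] at hk; simp at hk
    have hcard : (Finset.univ \ insert a s).card = k := by
      have h1 : (Finset.univ \ s).card = k + 1 := hk
      have : Finset.univ \ insert a s = (Finset.univ \ s).erase a := by
        ext x
        simp only [Finset.mem_sdiff, Finset.mem_erase, Finset.mem_insert, Finset.mem_univ,
          true_and]
        tauto
      rw [this, Finset.card_erase_of_mem (by simp [ha]), h1]
      omega
    have key : ∀ b : ZMod 2,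
        ∑ v ∈ Finset.univ.filter
          (fun v : Fin n → ZMod 2 => ∀ i ∈ insert a s, v i = Function.update u a b i), rho n v
        = (1 - MvPolynomial.C b - X a) * ∏ i ∈ s, (1 - MvPolynomial.C (u i) - X i) := by
      intro b
      rw [ih _ _ hcard, Finset.prod_insert ha, Function.update_self]
      congr 1
      refine Finset.prod_congr rfl fun i hi => ?_
      rw [Function.update_of_ne (show i ≠ a from fun h => ha (by rw [← h]; exact hi))]
    have split : Finset.univ.filter (fun v : Fin n → ZMod 2 => ∀ i ∈ s, v i = u i)
        = (Finset.univ.filter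
            (fun v : Fin n → ZMod 2 => ∀ i ∈ insert a s, v i = Function.update u a 0 i))
          ∪ (Finset.univ.filter
            (fun v : Fin n → ZMod 2 => ∀ i ∈ insert a s, v i = Function.update u a 1 i)) := by
      ext v
      simp only [Finset.mem_union, Finset.mem_filter, Finset.mem_univ, true_and]
      constructor
      · intro h
        have hup : ∀ b : ZMod 2, v a = b → ∀ i ∈ insert a s, v i = Function.update u a b i := by
          intro b hb i hi
          rcases Finset.mem_insert.mp hi with rfl | his
          · rw [Function.update_self]; exact hb
          · rw [Function.update_of_ne (fun hh => ha (by rw [← hh]; exact his))]; exact h i his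
        rcases (by decide : ∀ x : ZMod 2, x = 0 ∨ x = 1) (v a) with h0 | h1
        · exact Or.inl (hup 0 h0)
        · exact Or.inr (hup 1 h1)
      · intro h i hi
        rcases h with h | h
        · rw [h i (Finset.mem_insert_of_mem hi),
            Function.update_of_ne (fun hh => ha (by rw [← hh]; exact hi))]
        · rw [h i (Finset.mem_insert_of_mem hi),
            Function.update_of_ne (fun hh => ha (by rw [← hh]; exact hi))]
    have hdisj : Disjoint
        (Finset.univ.filter
          (fun v : Fin n → ZMod 2 => ∀ i ∈ insert a s, v i = Function.update u a 0 i))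
        (Finset.univ.filter
          (fun v : Fin n → ZMod 2 => ∀ i ∈ insert a s, v i = Function.update u a 1 i)) := by
      rw [Finset.disjoint_left]
      intro v h0 h1
      rw [Finset.mem_filter] at h0 h1
      have e0 := h0.2 a (Finset.mem_insert_self a s)
      have e1 := h1.2 a (Finset.mem_insert_self a s)
      rw [Function.update_self] at e0 e1
      rw [e0] at e1; exact absurd e1 (by decide)
    rw [split, Finset.sum_union hdisj, key 0, key 1, ← add_mul]
    have : (1 - MvPolynomial.C (0:ZMod 2) - X a) + (1 - MvPolynomial.C (1:ZMod 2) - X a) = (1:R) := by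
      rw [map_zero, MvPolynomial.C_1]
      have h2 : (2 : R) = 0 := charTwoR
      linear_combination (-(X a) : R) * h2
    rw [this, one_mul]

lemma pm_mem_neuralIdeal {S : Set (Fin n → ZMod 2)} (σ τ : Finset (Fin n)) (h : Disjoint σ τ)
    (hvan : ∀ v ∈ S, MvPolynomial.eval v (pm σ τ) = 0) :
    pm σ τ ∈ neuralIdeal n S := by
  classical
  set u : Fin n → ZMod 2 := fun i => if i ∈ τ then 0 else 1 with hu
  have hpm : pm σ τ = ∏ i ∈ σ ∪ τ, (1 - MvPolynomial.C (u i) - X i) := by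
    rw [pm, Finset.prod_union h]
    congr 1
    · refine Finset.prod_congr rfl fun i hi => ?_
      rw [hu]; simp only [if_neg (Finset.disjoint_left.mp h hi)]
      rw [MvPolynomial.C_1]
      have h2 : (2 : R) = 0 := charTwoR
      linear_combination (X i : R) * h2
    · refine Finset.prod_congr rfl fun i hi => ?_
      rw [hu]; simp only [if_pos hi, map_zero, sub_zero]
  rw [hpm, ← sum_rho_filter]
  apply Ideal.sum_mem
  intro v hv
  rw [Finset.mem_filter] at hv
  apply Ideal.subset_span
  refine ⟨v, ?_, rfl⟩
  intro hvS
  have h1 : MvPolynomial.eval v (pm σ τ) = 1 := by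
    rw [eval_pm]
    have hσ : ∀ i ∈ σ, v i = 1 := by
      intro i hi
      rw [hv.2 i (Finset.mem_union_left τ hi), hu]
      simp [if_neg (Finset.disjoint_left.mp h hi)]
    have hτ : ∀ j ∈ τ, v j = 0 := by
      intro j hj
      rw [hv.2 j (Finset.mem_union_right σ hj), hu]; simp [hj]
    have e1 : ∏ i ∈ σ, v i = 1 := Finset.prod_eq_one hσ
    have e2 : ∏ j ∈ τ, (1 - v j) = 1 :=
      Finset.prod_eq_one (fun j hj => by rw [hτ j hj, sub_zero])
    rw [e1, e2, one_mul]
  rw [hvan v hvS] at h1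
  exact absurd h1 (by decide)

end Stmt8Aux

namespace Stmt8Aux
open MvPolynomial Finset

variable {n : ℕ}

local notation "R" => MvPolynomial (Fin n) (ZMod 2)
local notation "mkB" => Ideal.Quotient.mk (boolIdeal n)

lemma X_sq_sub_X_mem (i : Fin n) : (X i : R) ^ 2 - X i ∈ boolIdeal n := by
  have : (X i : R) ^ 2 - X i = -(X i * (1 - X i)) := by ring
  rw [this]
  exact neg_mem (Ideal.subset_span ⟨i, rfl⟩)

lemma mkB_X_sq (i : Fin n) : mkB ((X i : R) ^ 2) = mkB (X i) :=
  Ideal.Quotient.eq.mpr (X_sq_sub_X_mem i)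

lemma mkB_X_pow (i : Fin n) (e : ℕ) (he : 1 ≤ e) : mkB ((X i : R) ^ e) = mkB (X i) := by
  induction e with
  | zero => omega
  | succ e ih =>
    by_cases he' : 1 ≤ e
    · rw [pow_succ, map_mul, ih he', ← map_mul, ← pow_two, mkB_X_sq]
    · have : e = 0 := by omega
      subst this; simp

lemma mkB_monomial (m : Fin n →₀ ℕ) (c : ZMod 2) :
    mkB (monomial (Finsupp.mapRange (fun e => min e 1) (by simp) m) c) = mkB (monomial m c) := by
  rw [MvPolynomial.monomial_eq, MvPolynomial.monomial_eq]
  rw [Finsupp.prod_mapRange_index (h := fun i e => (X i : R) ^ e) (by simp)]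
  rw [map_mul, map_mul]
  congr 1
  rw [Finsupp.prod, Finsupp.prod, map_prod, map_prod]
  apply Finset.prod_congr rfl
  intro i hi
  have hie : 1 ≤ m i := Nat.one_le_iff_ne_zero.mpr (Finsupp.mem_support_iff.mp hi)
  rw [mkB_X_pow i (m i) hie, mkB_X_pow i (min (m i) 1) (by omega)]

lemma mkB_sqReduce (h : MvPolynomial (Fin n) (ZMod 2)) : mkB (sqReduce n h) = mkB h := by
  conv_rhs => rw [← MvPolynomial.support_sum_monomial_coeff h]
  rw [sqReduce, map_sum, map_sum]
  exact Finset.sum_congr rfl fun m _ => mkB_monomial m _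

lemma sqReduce_squarefree (h : MvPolynomial (Fin n) (ZMod 2)) :
    IsSquareFreePoly n (sqReduce n h) := by
  classical
  intro m hm i
  rw [sqReduce] at hm
  have := MvPolynomial.support_sum hm
  obtain ⟨m', _, hmem⟩ := Finset.mem_biUnion.mp this
  have : m ∈ ({Finsupp.mapRange (fun e => min e 1) (by simp) m'} : Finset _) := by
    refine Finset.mem_of_subset ?_ hmem
    exact MvPolynomial.support_monomial_subset
  rw [Finset.mem_singleton] at this
  subst this
  simp [Finsupp.mapRange_apply]

lemma eval_boolIdeal {h : MvPolynomial (Fin n) (ZMod 2)} (hmem : h ∈ boolIdeal n)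
    (v : Fin n → ZMod 2) : MvPolynomial.eval v h = 0 := by
  rw [boolIdeal] at hmem
  refine Submodule.span_induction (p := fun h _ => MvPolynomial.eval v h = 0) ?_ ?_ ?_ ?_ hmem
  · rintro p ⟨i, rfl⟩
    simp only [map_mul, map_sub, map_one, MvPolynomial.eval_X]
    generalize v i = a; revert a; decide
  · simp
  · intro a b _ _ ha hb; simp [ha, hb]
  · intro a b _ hb; simp [hb]

lemma squarefree_eval_zero {p : MvPolynomial (Fin n) (ZMod 2)}
    (hsf : IsSquareFreePoly n p) (hz : ∀ v : Fin n → ZMod 2, MvPolynomial.eval v p = 0) :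
    p = 0 := by
  classical
  by_contra hp
  obtain ⟨m, hm, hmin⟩ := Finset.exists_min_image p.support (fun d => d.support.card)
    (MvPolynomial.support_nonempty.mpr hp)
  set v : Fin n → ZMod 2 := fun i => if i ∈ m.support then 1 else 0 with hv
  have heval : MvPolynomial.eval v p = MvPolynomial.coeff m p := by
    rw [MvPolynomial.eval_eq']
    rw [Finset.sum_eq_single m]
    · have : ∀ i, v i ^ m i = 1 := by
        intro i
        by_cases hi : i ∈ m.support
        · rw [hv]; simp [hi]
        · have : m i = 0 := Finsupp.notMem_support_iff.mp hi
          rw [this, pow_zero]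
      rw [Finset.prod_congr rfl (fun i _ => this i), Finset.prod_const_one, mul_one]
    · intro d hd hdm
      by_cases hsub : d.support ⊆ m.support
      · exfalso
        have hcard := hmin d hd
        have : d.support = m.support := Finset.eq_of_subset_of_card_le hsub hcard
        apply hdm
        ext i
        by_cases hi : i ∈ m.support
        · have h1 : d i ≤ 1 := hsf d hd i
          have h2 : m i ≤ 1 := hsf m hm i
          have h3 : 1 ≤ d i := Nat.one_le_iff_ne_zero.mpr
            (Finsupp.mem_support_iff.mp (this ▸ hi))
          have h4 : 1 ≤ m i := Nat.one_le_iff_ne_zero.mpr (Finsupp.mem_support_iff.mp hi)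
          omega
        · have h3 : d i = 0 := Finsupp.notMem_support_iff.mp (fun hh => hi (this ▸ hh))
          have h4 : m i = 0 := Finsupp.notMem_support_iff.mp hi
          rw [h3, h4]
      · obtain ⟨i, hid, him⟩ := Finset.not_subset.mp hsub
        have hvi : v i = 0 := by rw [hv]; simp [him]
        have : v i ^ d i = 0 := by
          rw [hvi]
          exact zero_pow (Finsupp.mem_support_iff.mp hid)
        rw [Finset.prod_eq_zero (Finset.mem_univ i) this, mul_zero]
    · intro hmm; exact absurd hm hmm
  have := hz v
  rw [heval] at this
  exact MvPolynomial.mem_support_iff.mp hm this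

lemma squarefree_eq_of_mkB {p q : MvPolynomial (Fin n) (ZMod 2)}
    (hp : IsSquareFreePoly n p) (hq : IsSquareFreePoly n q) (h : mkB p = mkB q) : p = q := by
  classical
  have hmem : p - q ∈ boolIdeal n := Ideal.Quotient.eq.mp h
  have hsf : IsSquareFreePoly n (p - q) := by
    intro m hm i
    rcases Finset.mem_union.mp (MvPolynomial.support_sub _ p q hm) with h' | h'
    · exact hp m h' i
    · exact hq m h' i
  have : p - q = 0 :=
    squarefree_eval_zero hsf (fun v => eval_boolIdeal hmem v)
  exact sub_eq_zero.mp this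

lemma prod_union_idem {M : Type*} [CommMonoid M] (a : Fin n → M)
    (ha : ∀ i, a i * a i = a i) (s t : Finset (Fin n)) :
    ∏ i ∈ s ∪ t, a i = (∏ i ∈ s, a i) * ∏ i ∈ t, a i := by
  classical
  rw [← Finset.prod_union_inter]
  have hsub : s ∩ t ⊆ s ∪ t := (Finset.inter_subset_left).trans Finset.subset_union_left
  conv_lhs => rw [← Finset.prod_sdiff hsub]
  conv_rhs => rw [← Finset.prod_sdiff hsub]
  rw [mul_assoc]
  congr 1
  rw [← Finset.prod_mul_distrib]
  exact (Finset.prod_congr rfl fun i _ => (ha i).symm)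

lemma mkB_pm_mul_pm (σ₁ τ₁ σ₂ τ₂ : Finset (Fin n)) :
    mkB (pm σ₁ τ₁ * pm σ₂ τ₂) = mkB (pm (σ₁ ∪ σ₂) (τ₁ ∪ τ₂)) := by
  classical
  have hy : ∀ i : Fin n, mkB (X i) * mkB (X i) = mkB (X i) := fun i => by
    rw [← map_mul, ← pow_two, mkB_X_sq]
  have hz : ∀ i : Fin n, mkB (1 - X i) * mkB (1 - X i) = mkB (1 - X i) := fun i => by
    rw [← map_mul]
    apply Ideal.Quotient.eq.mpr
    have : (1 - X i : R) * (1 - X i) - (1 - X i) = (X i) ^ 2 - X i := by ring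
    rw [this]
    exact X_sq_sub_X_mem i
  simp only [pm, map_mul, map_prod]
  rw [prod_union_idem _ hy σ₁ σ₂, prod_union_idem _ hz τ₁ τ₂]
  ring

end Stmt8Aux

namespace Stmt8Aux
open MvPolynomial Finset

variable {n : ℕ}

local notation "R" => MvPolynomial (Fin n) (ZMod 2)
local notation "mkB" => Ideal.Quotient.mk (boolIdeal n)

lemma sqReduce_pm_mul_disjoint (σ₁ τ₁ σ₂ τ₂ : Finset (Fin n))
    (h : Disjoint (σ₁ ∪ σ₂) (τ₁ ∪ τ₂)) :
    sqReduce n (pm σ₁ τ₁ * pm σ₂ τ₂) = pm (σ₁ ∪ σ₂) (τ₁ ∪ τ₂) := by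
  apply squarefree_eq_of_mkB (sqReduce_squarefree _) (pm_squarefree _ _ h)
  rw [mkB_sqReduce, mkB_pm_mul_pm]

lemma sqReduce_pm_mul_overlap (σ₁ τ₁ σ₂ τ₂ : Finset (Fin n))
    (h : ¬ Disjoint (σ₁ ∪ σ₂) (τ₁ ∪ τ₂)) :
    sqReduce n (pm σ₁ τ₁ * pm σ₂ τ₂) = 0 := by
  classical
  obtain ⟨i, hi1, hi2⟩ := Finset.not_disjoint_iff.mp h
  have hmem : pm (σ₁ ∪ σ₂) (τ₁ ∪ τ₂) ∈ boolIdeal n := by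
    rw [pm, ← Finset.prod_erase_mul _ _ hi1, ← Finset.prod_erase_mul _ _ hi2]
    have : (∏ j ∈ (σ₁ ∪ σ₂).erase i, X j : R) * X i *
        ((∏ j ∈ (τ₁ ∪ τ₂).erase i, (1 - X j)) * (1 - X i))
        = (X i * (1 - X i)) * ((∏ j ∈ (σ₁ ∪ σ₂).erase i, X j) *
          ∏ j ∈ (τ₁ ∪ τ₂).erase i, (1 - X j)) := by ring
    rw [this]
    exact Ideal.mul_mem_right _ _ (Ideal.subset_span ⟨i, rfl⟩)
  apply squarefree_eq_of_mkB (sqReduce_squarefree _) (by intro m hm i; simp at hm)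
  rw [mkB_sqReduce, mkB_pm_mul_pm, map_zero]
  exact Ideal.Quotient.eq_zero_iff_mem.mpr hmem

lemma pm_dvd_subsets {σ τ σ' τ' : Finset (Fin n)} (h : Disjoint σ τ)
    (k : MvPolynomial (Fin n) (ZMod 2)) (heq : pm σ τ = pm σ' τ' * k) :
    σ' ⊆ σ ∧ τ' ⊆ τ := by
  classical
  constructor
  · intro i hi
    by_contra his
    set v : Fin n → ZMod 2 := fun j => if j ∈ σ then 1 else 0 with hv
    have h1 : MvPolynomial.eval v (pm σ τ) = 1 := by
      rw [eval_pm]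
      have e1 : ∏ j ∈ σ, v j = 1 := Finset.prod_eq_one fun j hj => by rw [hv]; simp [hj]
      have e2 : ∏ j ∈ τ, (1 - v j) = 1 := Finset.prod_eq_one fun j hj => by
        rw [hv]; simp [if_neg (Finset.disjoint_right.mp h hj)]
      rw [e1, e2, one_mul]
    have h0 : MvPolynomial.eval v (pm σ' τ') = 0 := by
      rw [eval_pm]
      have : v i = 0 := by rw [hv]; simp [his]
      rw [Finset.prod_eq_zero hi this, zero_mul]
    rw [heq, map_mul, h0, zero_mul] at h1
    exact absurd h1 (by decide)
  · intro j hj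
    by_contra hjs
    set v : Fin n → ZMod 2 := fun i => if i ∈ τ then 0 else 1 with hv
    have h1 : MvPolynomial.eval v (pm σ τ) = 1 := by
      rw [eval_pm]
      have e1 : ∏ i ∈ σ, v i = 1 := Finset.prod_eq_one fun i hi => by
        rw [hv]; simp [if_neg (Finset.disjoint_left.mp h hi)]
      have e2 : ∏ i ∈ τ, (1 - v i) = 1 := Finset.prod_eq_one fun i hi => by
        rw [hv]; simp [hi]
      rw [e1, e2, one_mul]
    have h0 : MvPolynomial.eval v (pm σ' τ') = 0 := by
      rw [eval_pm]
      have : 1 - v j = 0 := by rw [hv]; simp [hjs]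
      rw [Finset.prod_eq_zero hj this, mul_zero]
    rw [heq, map_mul, h0, zero_mul] at h1
    exact absurd h1 (by decide)

lemma exists_CF_dvd (J : Ideal (MvPolynomial (Fin n) (ZMod 2)))
    (f : MvPolynomial (Fin n) (ZMod 2)) (hf : IsPseudoMonomial n f) (hfJ : f ∈ J) :
    ∃ g ∈ CF n J, ∃ k, f = g * k := by
  classical
  suffices H : ∀ (N : ℕ) (f : MvPolynomial (Fin n) (ZMod 2)), f.totalDegree ≤ N →
      IsPseudoMonomial n f → f ∈ J → ∃ g ∈ CF n J, ∃ k, f = g * k from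
    H f.totalDegree f le_rfl hf hfJ
  intro N
  induction N with
  | zero =>
    intro f hdeg hf hfJ
    refine ⟨f, ⟨hfJ, hf, ?_⟩, 1, (mul_one f).symm⟩
    rintro ⟨g, _, _, hlt, _⟩
    omega
  | succ N ih =>
    intro f hdeg hf hfJ
    by_cases hmin : IsMinimalPM n J f
    · exact ⟨f, hmin, 1, (mul_one f).symm⟩
    · rw [IsMinimalPM] at hmin
      push_neg at hmin
      obtain ⟨g, hgpm, hgJ, hglt, k, hk⟩ := hmin hfJ hf
      obtain ⟨g', hg', k', hk'⟩ := ih g (by omega) hgpm hgJ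
      exact ⟨g', hg', k' * k, by rw [hk, hk', mul_assoc]⟩

lemma neuralIdeal_anti {S T : Set (Fin n → ZMod 2)} (h : S ⊆ T) :
    neuralIdeal n T ≤ neuralIdeal n S := by
  apply Ideal.span_mono
  rintro p ⟨v, hv, rfl⟩
  exact ⟨v, fun hvS => hv (h hvS), rfl⟩

end Stmt8Aux

namespace Stmt8Aux
open MvPolynomial Finset

variable {n : ℕ}

lemma pm_mul_sdiff {σ' σ τ' τ : Finset (Fin n)} (hσ : σ' ⊆ σ) (hτ : τ' ⊆ τ) :
    pm σ' τ' * pm (σ \ σ') (τ \ τ') = pm σ τ := by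
  rw [pm, pm, pm, ← Finset.prod_sdiff hσ, ← Finset.prod_sdiff hτ]
  ring

end Stmt8Aux

open Stmt8Aux in
theorem stmt8 (n : ℕ) (hn : 1 ≤ n) (Co D : Set (Fin n → ZMod 2)) :
    minReducedProducts n Co D ⊆ CF n (neuralIdeal n (Co ∪ D)) := by
  classical
  intro h hMP
  obtain ⟨⟨f, hfCF, g, hgCF, hfg⟩, hne, hminMP⟩ := hMP
  obtain ⟨σ₁, τ₁, hd1, hf⟩ := hfCF.2.1
  obtain ⟨σ₂, τ₂, hd2, hg⟩ := hgCF.2.1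
  have hf1 : f = pm σ₁ τ₁ := hf
  have hg1 : g = pm σ₂ τ₂ := hg
  by_cases hdis : Disjoint (σ₁ ∪ σ₂) (τ₁ ∪ τ₂)
  · -- h = pm (σ₁ ∪ σ₂) (τ₁ ∪ τ₂)
    set σ := σ₁ ∪ σ₂ with hσdef
    set τ := τ₁ ∪ τ₂ with hτdef
    have hpm : h = pm σ τ := by
      rw [hfg, hf1, hg1, sqReduce_pm_mul_disjoint _ _ _ _ hdis]
    -- h ∈ J_Co and h ∈ J_D
    have hJCo : h ∈ neuralIdeal n Co := by
      rw [hpm, ← pm_mul_sdiff (Finset.subset_union_left (s₂ := σ₂))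
        (Finset.subset_union_left (s₂ := τ₂)), ← hf1]
      exact Ideal.mul_mem_right _ _ hfCF.1
    have hJD : h ∈ neuralIdeal n D := by
      rw [hpm, ← pm_mul_sdiff (Finset.subset_union_right (s₁ := σ₁))
        (Finset.subset_union_right (s₁ := τ₁)), ← hg1]
      exact Ideal.mul_mem_right _ _ hgCF.1
    have hmem : h ∈ neuralIdeal n (Co ∪ D) := by
      rw [hpm]
      apply pm_mem_neuralIdeal σ τ hdis
      intro v hv
      rw [← hpm]
      rcases hv with hv | hv
      · exact eval_mem_neuralIdeal hJCo hv
      · exact eval_mem_neuralIdeal hJD hv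
    refine ⟨hmem, ⟨σ, τ, hdis, hpm⟩, ?_⟩
    rintro ⟨q, hqpm, hqJ, hqlt, k, hk⟩
    obtain ⟨σg, τg, hdg, hq⟩ := hqpm
    have hq1 : q = pm σg τg := hq
    have hsub : σg ⊆ σ ∧ τg ⊆ τ := by
      apply pm_dvd_subsets hdis k
      rw [← hpm, hk, hq1]
    -- q ∈ J_Co, J_D
    have hqCo : q ∈ neuralIdeal n Co := neuralIdeal_anti Set.subset_union_left hqJ
    have hqD : q ∈ neuralIdeal n D := neuralIdeal_anti Set.subset_union_right hqJ
    obtain ⟨f₁, hf₁CF, k₁, hk₁⟩ := exists_CF_dvd _ q ⟨σg, τg, hdg, hq1⟩ hqCo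
    obtain ⟨f₂, hf₂CF, k₂, hk₂⟩ := exists_CF_dvd _ q ⟨σg, τg, hdg, hq1⟩ hqD
    obtain ⟨σ₁', τ₁', hd1', hf₁⟩ := hf₁CF.2.1
    obtain ⟨σ₂', τ₂', hd2', hf₂⟩ := hf₂CF.2.1
    have hsub1 : σ₁' ⊆ σg ∧ τ₁' ⊆ τg := by
      apply pm_dvd_subsets hdg k₁
      rw [← hq1, hk₁, hf₁]; rfl
    have hsub2 : σ₂' ⊆ σg ∧ τ₂' ⊆ τg := by
      apply pm_dvd_subsets hdg k₂
      rw [← hq1, hk₂, hf₂]; rfl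
    set σs := σ₁' ∪ σ₂' with hσs
    set τs := τ₁' ∪ τ₂' with hτs
    have hσsg : σs ⊆ σg := Finset.union_subset hsub1.1 hsub2.1
    have hτsg : τs ⊆ τg := Finset.union_subset hsub1.2 hsub2.2
    have hσsσ : σs ⊆ σ := hσsg.trans hsub.1
    have hτsτ : τs ⊆ τ := hτsg.trans hsub.2
    have hdiss : Disjoint σs τs := Finset.disjoint_of_subset_left hσsσ
      (Finset.disjoint_of_subset_right hτsτ hdis)
    have hp : sqReduce n (f₁ * f₂) = pm σs τs := by
      rw [show f₁ = pm σ₁' τ₁' from hf₁, show f₂ = pm σ₂' τ₂' from hf₂,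
        sqReduce_pm_mul_disjoint _ _ _ _ hdiss]
    apply hminMP
    refine ⟨pm σs τs, ⟨f₁, hf₁CF, f₂, hf₂CF, hp.symm⟩, pm (σ \ σs) (τ \ τs), ?_, ?_⟩
    · -- degree of cofactor ≥ 1
      have hdisc : Disjoint (σ \ σs) (τ \ τs) := Finset.disjoint_of_subset_left
        (Finset.sdiff_subset) (Finset.disjoint_of_subset_right Finset.sdiff_subset hdis)
      rw [pm_totalDegree _ _ hdisc, Finset.card_sdiff_of_subset hσsσ, Finset.card_sdiff_of_subset hτsτ]
      have hdq : q.totalDegree = σg.card + τg.card := by rw [hq1, pm_totalDegree _ _ hdg]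
      have hdh : h.totalDegree = σ.card + τ.card := by rw [hpm, pm_totalDegree _ _ hdis]
      have h1 : σs.card ≤ σg.card := Finset.card_le_card hσsg
      have h2 : τs.card ≤ τg.card := Finset.card_le_card hτsg
      have h3 : σs.card ≤ σ.card := Finset.card_le_card hσsσ
      have h4 : τs.card ≤ τ.card := Finset.card_le_card hτsτ
      omega
    · rw [hpm, pm_mul_sdiff hσsσ hτsτ]
  · exfalso
    apply hne
    rw [hfg, hf1, hg1]
    exact sqReduce_pm_mul_overlap _ _ _ _ hdis
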